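/- Let d ≥ 1, κ > 0, and let f : ℝ^d → [0,∞) be integrable with ρ_f := ∫_{ℝ^d} f(v) dv > 0, with v ↦ |v|² f(v) integrable and v ↦ f(v) log f(v) integrable (convention 0·log 0 = 0). Set u_f := ρ_f^{-1} ∫_{ℝ^d} v f(v) dv. Then (1/2) ρ_f |u_f|² + κ ρ_f log ρ_f ≤ ∫_{ℝ^d} ( (1/2)|v|² f(v) + κ f(v) log f(v) + κ (d/2) log(2πκ) f(v) ) dv. -/

import Mathlib

open MeasureTheory

/-- Pointwise Gibbs inequality: `a log m + a - m ≤ a log a` for `a ≥ 0`, `m > 0`. -/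
lemma gibbs_pointwise {a m : ℝ} (ha : 0 ≤ a) (hm : 0 < m) :
    a * Real.log m + a - m ≤ a * Real.log a := by
  rcases eq_or_lt_of_le ha with h | h
  · rw [← h]; simp; linarith
  · have hlog : Real.log (m / a) ≤ m / a - 1 :=
      Real.log_le_sub_one_of_pos (by positivity)
    rw [Real.log_div hm.ne' h.ne'] at hlog
    have h2 := mul_le_mul_of_nonneg_left hlog ha
    have ha' : a * (m / a - 1) = m - a := by field_simp
    nlinarith

set_option maxHeartbeats 1000000 in
/-- The minimization principle (1.12): the macroscopic free energy
`(1/2)ρ_f|u_f|² + κρ_f log ρ_f` is bounded by the kinetic free energy `∫ H_κ[f] dv`. -/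
theorem free_energy_minimization (d : ℕ) (hd : 1 ≤ d) (κ : ℝ) (hκ : 0 < κ)
    (f : EuclideanSpace ℝ (Fin d) → ℝ) (hf_nonneg : ∀ v, 0 ≤ f v)
    (hf_int : Integrable f) (hρ : 0 < ∫ v, f v)
    (hmom : Integrable (fun v => ‖v‖^2 * f v))
    (hent : Integrable (fun v => f v * Real.log (f v))) :
    (1/2) * (∫ v, f v) * ‖(∫ v, f v)⁻¹ • (∫ v, f v • v)‖^2
        + κ * (∫ v, f v) * Real.log (∫ v, f v) ≤
      ∫ v, ((1/2) * ‖v‖^2 * f v + κ * (f v * Real.log (f v))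
        + κ * ((d:ℝ)/2) * Real.log (2 * Real.pi * κ) * f v) := by
  classical
  set ρ : ℝ := ∫ v, f v with hρ_def
  set u : EuclideanSpace ℝ (Fin d) := ρ⁻¹ • (∫ v, f v • v) with hu_def
  have hρ0 : ρ ≠ 0 := hρ.ne'
  have h2πκ : (0:ℝ) < 2 * Real.pi * κ := by positivity
  set c : ℝ := ((2 * Real.pi * κ) ^ ((d:ℝ)/2))⁻¹ with hc_def
  have hc_pos : 0 < c := by positivity
  have hb : (0:ℝ) < 1/(2*κ) := by positivity
  -- integrability of v ↦ f v • v
  have hfv : Integrable (fun v : EuclideanSpace ℝ (Fin d) => f v • v) := by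
    refine Integrable.mono' (hf_int.add hmom)
      (hf_int.aestronglyMeasurable.smul aestronglyMeasurable_id) ?_
    filter_upwards with v
    have h1 : ‖f v • v‖ = f v * ‖v‖ := by
      rw [norm_smul, Real.norm_eq_abs, abs_of_nonneg (hf_nonneg v)]
    have h2 : ‖v‖ ≤ 1 + ‖v‖^2 := by nlinarith [norm_nonneg v, sq_nonneg (‖v‖ - 1)]
    have h3 := mul_le_mul_of_nonneg_left h2 (hf_nonneg v)
    rw [h1]
    calc f v * ‖v‖ ≤ f v * (1 + ‖v‖^2) := h3
      _ = f v + ‖v‖^2 * f v := by ring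
  have hmomval : (∫ v, f v • v) = ρ • u := by
    rw [hu_def, smul_smul, mul_inv_cancel₀ hρ0, one_smul]
  -- integrability of f v * ‖v - u‖ ^ 2
  have hfvu : Integrable (fun v : EuclideanSpace ℝ (Fin d) => f v * ‖v - u‖^2) := by
    refine Integrable.mono' ((hmom.const_mul 2).add ((hf_int.const_mul (2 * ‖u‖^2))))
      (hf_int.aestronglyMeasurable.mul
        (((continuous_id.sub continuous_const).norm.pow 2).aestronglyMeasurable)) ?_
    filter_upwards with v
    have h1 : ‖v - u‖^2 ≤ 2 * ‖v‖^2 + 2 * ‖u‖^2 := by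
      have h0 := norm_sub_le v u
      have h0' := mul_self_le_mul_self (norm_nonneg (v - u)) h0
      nlinarith [norm_nonneg v, norm_nonneg u, sq_nonneg (‖v‖ - ‖u‖)]
    have h2 := mul_le_mul_of_nonneg_left h1 (hf_nonneg v)
    rw [Real.norm_eq_abs, abs_of_nonneg (mul_nonneg (hf_nonneg v) (sq_nonneg _))]
    calc f v * ‖v - u‖^2 ≤ f v * (2 * ‖v‖^2 + 2 * ‖u‖^2) := h2
      _ = 2 * (‖v‖^2 * f v) + 2 * ‖u‖^2 * f v := by ring
  -- the "momentum" piece via inner products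
  set B : EuclideanSpace ℝ (Fin d) → ℝ := fun v => (inner ℝ u (f v • v) : ℝ) with hB_def
  have hB_int : Integrable B :=
    (innerSL ℝ u).integrable_comp hfv
  have hB_val : (∫ v, B v) = ρ * ‖u‖^2 := by
    rw [hB_def]
    rw [integral_inner hfv u, hmomval, inner_smul_right, real_inner_self_eq_norm_sq]
  -- value of ∫ f v * ‖v - u‖^2
  have hfvu_val : (∫ v, f v * ‖v - u‖^2) = (∫ v, ‖v‖^2 * f v) - ρ * ‖u‖^2 := by
    have expand : ∀ v : EuclideanSpace ℝ (Fin d), f v * ‖v - u‖^2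
        = ‖v‖^2 * f v - 2 * B v + ‖u‖^2 * f v := by
      intro v
      have h := @norm_sub_sq_real (EuclideanSpace ℝ (Fin d)) _ _ v u
      have hB : B v = f v * (inner ℝ v u : ℝ) := by
        rw [hB_def]; simp only [inner_smul_right]; rw [real_inner_comm]; try ring
      rw [h, hB]; try ring
    simp_rw [expand]
    have i2B : Integrable (fun v : EuclideanSpace ℝ (Fin d) => 2 * B v) :=
      hB_int.const_mul 2
    have iA : Integrable (fun v : EuclideanSpace ℝ (Fin d) => ‖v‖^2 * f v - 2 * B v) :=
      hmom.sub i2B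
    have iC : Integrable (fun v : EuclideanSpace ℝ (Fin d) => ‖u‖^2 * f v) :=
      hf_int.const_mul _
    rw [integral_add iA iC, integral_sub hmom i2B, integral_const_mul, integral_const_mul,
      hB_val, ← hρ_def]
    ring
  -- the Maxwellian
  set M : EuclideanSpace ℝ (Fin d) → ℝ :=
    fun v => (ρ * c) * Real.exp (-(1/(2*κ)) * ‖v - u‖^2) with hM_def
  have hM_pos : ∀ v, 0 < M v := by
    intro v; rw [hM_def]
    have := Real.exp_pos (-(1/(2*κ)) * ‖v - u‖^2)
    positivity
  have hexp_int : Integrable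
      (fun v : EuclideanSpace ℝ (Fin d) => Real.exp (-(1/(2*κ)) * ‖v‖^2)) := by
    have hc1 := GaussianFourier.integrable_cexp_neg_mul_sq_norm_add
      (b := ((1/(2*κ):ℝ) : ℂ)) (by simpa using hb) 0 (0 : EuclideanSpace ℝ (Fin d))
    refine hc1.norm.congr (Filter.Eventually.of_forall fun v => ?_)
    have hz : (-((1/(2*κ):ℝ):ℂ) * ((‖v‖ : ℝ):ℂ)^2
        + 0 * ((inner ℝ (0 : EuclideanSpace ℝ (Fin d)) v : ℝ) : ℂ))
        = (((-(1/(2*κ)) * ‖v‖^2 : ℝ)) : ℂ) := by push_cast; ring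
    show ‖Complex.exp _‖ = _
    rw [hz, Complex.norm_exp, Complex.ofReal_re]
  have hM_int : Integrable M := by
    rw [hM_def]
    exact (hexp_int.comp_sub_right u).const_mul (ρ * c)
  have hIexp : (∫ v : EuclideanSpace ℝ (Fin d), Real.exp (-(1/(2*κ)) * ‖v‖^2))
      = (2 * Real.pi * κ) ^ ((d:ℝ)/2) := by
    rw [GaussianFourier.integral_rexp_neg_mul_sq_norm hb]
    rw [finrank_euclideanSpace_fin]
    congr 1
    field_simp
  have hM_val : (∫ v, M v) = ρ := by
    rw [hM_def]
    rw [integral_const_mul]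
    rw [integral_sub_right_eq_self
      (fun v : EuclideanSpace ℝ (Fin d) => Real.exp (-(1/(2*κ)) * ‖v‖^2)) u]
    rw [hIexp, hc_def, mul_assoc, inv_mul_cancel₀ (by positivity), mul_one]
  -- logarithm of the Maxwellian
  have hlogM : ∀ v, f v * Real.log (M v)
      = Real.log ρ * f v + Real.log c * f v - (1/(2*κ)) * (f v * ‖v - u‖^2) := by
    intro v
    rw [hM_def]
    rw [Real.log_mul (mul_ne_zero hρ0 hc_pos.ne') (Real.exp_ne_zero _),
      Real.log_mul hρ0 hc_pos.ne', Real.log_exp]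
    ring
  -- pointwise Gibbs inequality
  have key : ∀ v, Real.log ρ * f v + Real.log c * f v - (1/(2*κ)) * (f v * ‖v - u‖^2)
      + f v - M v ≤ f v * Real.log (f v) := by
    intro v
    have h := gibbs_pointwise (hf_nonneg v) (hM_pos v)
    rw [hlogM v] at h
    linarith
  -- integrate
  have g_int : Integrable (fun v : EuclideanSpace ℝ (Fin d) =>
      Real.log ρ * f v + Real.log c * f v - (1/(2*κ)) * (f v * ‖v - u‖^2)
        + f v - M v) :=
    ((((hf_int.const_mul (Real.log ρ)).add (hf_int.const_mul (Real.log c))).sub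
      (hfvu.const_mul (1/(2*κ)))).add hf_int).sub hM_int
  have hint_le := integral_mono g_int hent (fun v => key v)
  have g_val : (∫ v, (Real.log ρ * f v + Real.log c * f v
      - (1/(2*κ)) * (f v * ‖v - u‖^2) + f v - M v))
      = Real.log ρ * ρ + Real.log c * ρ
        - (1/(2*κ)) * ((∫ v, ‖v‖^2 * f v) - ρ * ‖u‖^2) := by
    have i1 : Integrable (fun v : EuclideanSpace ℝ (Fin d) => Real.log ρ * f v) :=
      hf_int.const_mul _
    have i2 : Integrable (fun v : EuclideanSpace ℝ (Fin d) => Real.log c * f v) :=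
      hf_int.const_mul _
    have i3 : Integrable (fun v : EuclideanSpace ℝ (Fin d) =>
        (1/(2*κ)) * (f v * ‖v - u‖^2)) := hfvu.const_mul _
    have i12 : Integrable (fun v : EuclideanSpace ℝ (Fin d) =>
        Real.log ρ * f v + Real.log c * f v) := i1.add i2
    have i123 : Integrable (fun v : EuclideanSpace ℝ (Fin d) =>
        Real.log ρ * f v + Real.log c * f v - (1/(2*κ)) * (f v * ‖v - u‖^2)) := i12.sub i3
    have i1234 : Integrable (fun v : EuclideanSpace ℝ (Fin d) =>
        Real.log ρ * f v + Real.log c * f v - (1/(2*κ)) * (f v * ‖v - u‖^2) + f v) :=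
      i123.add hf_int
    rw [integral_sub i1234 hM_int, integral_add i123 hf_int, integral_sub i12 i3,
      integral_add i1 i2, integral_const_mul, integral_const_mul, integral_const_mul,
      hfvu_val, hM_val, ← hρ_def]
    ring
  rw [g_val] at hint_le
  -- split the right-hand side integral
  set K : ℝ := κ * ((d:ℝ)/2) * Real.log (2 * Real.pi * κ) with hK_def
  have h1 : Integrable (fun v : EuclideanSpace ℝ (Fin d) => (1/2) * ‖v‖^2 * f v) := by
    simpa [mul_assoc] using hmom.const_mul (1/2)
  have h2 : Integrable (fun v : EuclideanSpace ℝ (Fin d) =>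
      κ * (f v * Real.log (f v))) := hent.const_mul κ
  have h3 : Integrable (fun v : EuclideanSpace ℝ (Fin d) => K * f v) :=
    hf_int.const_mul K
  have hsplit : (∫ v, ((1/2) * ‖v‖^2 * f v + κ * (f v * Real.log (f v))
        + K * f v))
      = (1/2) * (∫ v, ‖v‖^2 * f v) + κ * (∫ v, f v * Real.log (f v)) + K * ρ := by
    have h12 : Integrable (fun v : EuclideanSpace ℝ (Fin d) =>
        (1/2) * ‖v‖^2 * f v + κ * (f v * Real.log (f v))) := h1.add h2
    rw [integral_add h12 h3, integral_add h1 h2, integral_const_mul, integral_const_mul,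
      ← hρ_def]
    congr 2
    simp_rw [mul_assoc]
    rw [integral_const_mul]
  have hgoal_rw : (∫ v, ((1/2) * ‖v‖^2 * f v + κ * (f v * Real.log (f v))
        + κ * ((d:ℝ)/2) * Real.log (2 * Real.pi * κ) * f v))
      = (1/2) * (∫ v, ‖v‖^2 * f v) + κ * (∫ v, f v * Real.log (f v)) + K * ρ := by
    rw [← hsplit, hK_def]
  rw [hgoal_rw]
  -- the value of log c
  have hlogc : Real.log c = -(((d:ℝ)/2) * Real.log (2 * Real.pi * κ)) := by
    rw [hc_def, Real.log_inv, Real.log_rpow h2πκ]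
  have hKc : κ * (Real.log c * ρ) = -(K * ρ) := by
    rw [hlogc, hK_def]; ring
  -- multiply the entropy inequality by κ and conclude
  have hmul := mul_le_mul_of_nonneg_left hint_le hκ.le
  have hexpand : κ * (Real.log ρ * ρ + Real.log c * ρ
      - (1/(2*κ)) * ((∫ v, ‖v‖^2 * f v) - ρ * ‖u‖^2))
      = κ * (Real.log ρ * ρ) + κ * (Real.log c * ρ)
        - (1/2) * ((∫ v, ‖v‖^2 * f v) - ρ * ‖u‖^2) := by
    field_simp
  rw [hexpand] at hmul
  have e1 : κ * (Real.log ρ * ρ) = κ * ρ * Real.log ρ := by ring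
  nlinarith [hmul, hKc, e1]
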